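/- Let D ⊆ ℝ² be open, λ : D → ℝ, and let Φ : D → ℝᵐ be a differentiable conformal map: ∂_{x_1}Φ·∂_{x_2}Φ = 0 and |∂_{x_1}Φ|² = |∂_{x_2}Φ|² = e^{2λ}. Let L : D → ℝᵐ be differentiable with ∂_{x_1}L = e^{−2λ}·∂_{x_1}Φ and ∂_{x_2}L = −e^{−2λ}·∂_{x_2}Φ, and let w : D → ℝᵐ be differentiable. Let ν denote the derivative at t = 0 of the induced-metric matrices (G_t)_{ij} = ∂_{x_i}(Φ + tw)·∂_{x_j}(Φ + tw). Then the trace-free part ν⁰ := ν − (tr ν/2)·I₂ satisfies, pointwise on D, ν⁰ = e^{2λ}·[ (∇w·∇L)·S₁ + (∇w·∇⊥L)·S₂ ], where ∇w·∇L := ∂_{x_1}w·∂_{x_1}L + ∂_{x_2}w·∂_{x_2}L, ∇w·∇⊥L := −∂_{x_1}w·∂_{x_2}L + ∂_{x_2}w·∂_{x_1}L, S₁ = [[1,0],[0,−1]] and S₂ = [[0,1],[1,0]]. -/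

import Mathlib

open Matrix

/-- The partial derivative `∂_{x_i} F` of a map `F : ℝ² → ℝᵐ`. -/
noncomputable def pderiv' {m : ℕ} (F : (Fin 2 → ℝ) → Fin m → ℝ) (i : Fin 2)
    (x : Fin 2 → ℝ) : Fin m → ℝ :=
  fderiv ℝ F x (Pi.single i 1)

/-- The matrix `(G_F)_{ij} = ∂_{x_i}F · ∂_{x_j}F` of the metric induced on `ℝ²` by a
map `F : ℝ² → ℝᵐ` (Euclidean dot products in `ℝᵐ`). -/
noncomputable def inducedMetric {m : ℕ} (F : (Fin 2 → ℝ) → Fin m → ℝ)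
    (x : Fin 2 → ℝ) : Matrix (Fin 2) (Fin 2) ℝ :=
  Matrix.of fun i j => pderiv' F i x ⬝ᵥ pderiv' F j x

/-- The matrix `S₁ = [[1,0],[0,−1]]`. -/
def S1 : Matrix (Fin 2) (Fin 2) ℝ := !![1, 0; 0, -1]

/-- The matrix `S₂ = [[0,1],[1,0]]`. -/
def S2 : Matrix (Fin 2) (Fin 2) ℝ := !![0, 1; 1, 0]

/-- equation (II.25) of the paper. Let `Φ : D → ℝᵐ` be a conformal
differentiable map with conformal factor `e^{2λ}` on an open set `D ⊆ ℝ²`, let `L` be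
its conjugate map (`∂₁L = e^{−2λ}∂₁Φ`, `∂₂L = −e^{−2λ}∂₂Φ`) and `w` differentiable.
If `ν` denotes the derivative at `t = 0` of the induced metrics of `Φ + t·w`, then its
trace-free part is `ν⁰ = e^{2λ}·[(∇w·∇L)·S₁ + (∇w·∇⊥L)·S₂]` pointwise on `D`, where
`∇w·∇L = ∂₁w·∂₁L + ∂₂w·∂₂L` and `∇w·∇⊥L = −∂₁w·∂₂L + ∂₂w·∂₁L`. -/
theorem statement10 {m : ℕ} (D : Set (Fin 2 → ℝ)) (hD : IsOpen D)
    (lam : (Fin 2 → ℝ) → ℝ)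
    (Φ L w : (Fin 2 → ℝ) → Fin m → ℝ)
    (hΦ : ∀ x ∈ D, DifferentiableAt ℝ Φ x)
    (hL : ∀ x ∈ D, DifferentiableAt ℝ L x)
    (hw : ∀ x ∈ D, DifferentiableAt ℝ w x)
    (hconf : ∀ x ∈ D, pderiv' Φ 0 x ⬝ᵥ pderiv' Φ 1 x = 0)
    (hconf1 : ∀ x ∈ D, pderiv' Φ 0 x ⬝ᵥ pderiv' Φ 0 x = Real.exp (2 * lam x))
    (hconf2 : ∀ x ∈ D, pderiv' Φ 1 x ⬝ᵥ pderiv' Φ 1 x = Real.exp (2 * lam x))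
    (hL1 : ∀ x ∈ D, pderiv' L 0 x = Real.exp (-(2 * lam x)) • pderiv' Φ 0 x)
    (hL2 : ∀ x ∈ D, pderiv' L 1 x = -(Real.exp (-(2 * lam x))) • pderiv' Φ 1 x) :
    ∀ x ∈ D,
      let ν : Matrix (Fin 2) (Fin 2) ℝ :=
        Matrix.of fun i j =>
          deriv (fun t : ℝ => inducedMetric (fun y => Φ y + t • w y) x i j) 0
      ν - (ν.trace / 2) • 1 =
        Real.exp (2 * lam x) •
          ((pderiv' w 0 x ⬝ᵥ pderiv' L 0 x + pderiv' w 1 x ⬝ᵥ pderiv' L 1 x) • S1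
            + (-(pderiv' w 0 x ⬝ᵥ pderiv' L 1 x) + pderiv' w 1 x ⬝ᵥ pderiv' L 0 x) • S2) := by

  intro x hx
  have hΦx := hΦ x hx
  have hwx := hw x hx
  set a : Fin 2 → Fin m → ℝ := fun i => pderiv' Φ i x with ha
  set b : Fin 2 → Fin m → ℝ := fun i => pderiv' w i x with hb
  have hpd : ∀ (t : ℝ) (i : Fin 2),
      pderiv' (fun y => Φ y + t • w y) i x = a i + t • b i := by
    intro t i
    have h1 : fderiv ℝ (fun y => Φ y + t • w y) x
        = fderiv ℝ Φ x + t • fderiv ℝ w x := by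
      rw [fderiv_fun_add (g := fun y => t • w y) hΦx (hwx.const_smul t), fderiv_fun_const_smul hwx]
    simp only [pderiv', h1, ContinuousLinearMap.add_apply, ContinuousLinearMap.smul_apply]
    rfl
  have hderiv : ∀ i j : Fin 2,
      deriv (fun t : ℝ => inducedMetric (fun y => Φ y + t • w y) x i j) 0
      = a i ⬝ᵥ b j + b i ⬝ᵥ a j := by
    intro i j
    have hfun : (fun t : ℝ => inducedMetric (fun y => Φ y + t • w y) x i j)
        = fun t : ℝ => a i ⬝ᵥ a j + t * (a i ⬝ᵥ b j + b i ⬝ᵥ a j)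
            + t * t * (b i ⬝ᵥ b j) := by
      funext t
      simp only [inducedMetric, Matrix.of_apply, hpd t, dotProduct_add, add_dotProduct,
        smul_dotProduct, dotProduct_smul, smul_eq_mul]
      ring
    rw [hfun]
    have hh : HasDerivAt (fun t : ℝ => a i ⬝ᵥ a j + t * (a i ⬝ᵥ b j + b i ⬝ᵥ a j)
        + t * t * (b i ⬝ᵥ b j)) (a i ⬝ᵥ b j + b i ⬝ᵥ a j) 0 := by
      have h1 : HasDerivAt (fun t : ℝ => a i ⬝ᵥ a j + t * (a i ⬝ᵥ b j + b i ⬝ᵥ a j)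
          + t * t * (b i ⬝ᵥ b j))
          (0 + 1 * (a i ⬝ᵥ b j + b i ⬝ᵥ a j) + (1 * 0 + 0 * 1) * (b i ⬝ᵥ b j)) 0 :=
        ((hasDerivAt_const (0:ℝ) (a i ⬝ᵥ a j)).add
          ((hasDerivAt_id (0:ℝ)).mul_const _)).add
          (((hasDerivAt_id (0:ℝ)).mul (hasDerivAt_id (0:ℝ))).mul_const _)
      simpa using h1
    exact hh.deriv
  have hne : Real.exp (2 * lam x) ≠ 0 := Real.exp_ne_zero _
  have hmul : Real.exp (2 * lam x) * Real.exp (-(2 * lam x)) = 1 := by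
    rw [← Real.exp_add]; simp
  intro ν
  have hν : ∀ i j : Fin 2, ν i j = a i ⬝ᵥ b j + b i ⬝ᵥ a j := by
    intro i j; exact hderiv i j
  ext i j
  have hL1' := hL1 x hx
  have hL2' := hL2 x hx
  fin_cases i <;> fin_cases j <;>
    simp only [Matrix.sub_apply, Matrix.smul_apply, Matrix.add_apply, Matrix.one_apply,
      Matrix.trace_fin_two, hν, hL1', hL2', S1, S2, Matrix.cons_val', Matrix.cons_val_zero,
      Matrix.cons_val_one, Matrix.head_cons, Matrix.empty_val', Matrix.cons_val_fin_one,
      Matrix.head_fin_const, dotProduct_smul, dotProduct_neg, neg_smul, smul_eq_mul,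
      Real.exp_neg] <;>
    field_simp <;> simp [ha, hb, dotProduct_comm] <;> ring
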